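/- The multipliers of the Neville elimination of the Bessel coefficient matrix A are m_{ij} = (2i-2)(2i-3) / ((2i-j-1)(2i-j-2)) for 1 ≤ j < i ≤ n; i.e., p_{ij}/p_{i-1,j} equals this expression, where p_{ij} are the pivots. -/

import Mathlib

/-- Entries of the lower triangular Bessel coefficient matrix. -/
noncomputable def besselA (i j : ℕ) : ℝ :=
  if j ≤ i then ((i + j - 2).factorial : ℝ) / (2 ^ (j - 1) * (i - j).factorial * (j - 1).factorial)
  else 0

/-- `besselNE k i j` is the `(i,j)` entry of `A^{(k+1)}`, the matrix obtained after `k`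
steps of Neville elimination of the Bessel coefficient matrix (no row exchanges needed). -/
noncomputable def besselNE : ℕ → ℕ → ℕ → ℝ
  | 0, i, j => besselA i j
  | k + 1, i, j =>
      if k + 1 ≤ j ∧ j < i then
        besselNE k i j - besselNE k i (k + 1) / besselNE k (i - 1) (k + 1) * besselNE k (i - 1) j
      else besselNE k i j

/-- Closed form for the entries after `k` Neville elimination steps, reparametrized by
`i = k+1+b+c`, `j = k+1+b`. -/
noncomputable def besselG (k b c : ℕ) : ℝ :=
  ((2*k+2*b+2*c).factorial : ℝ) * ((b+c).factorial : ℝ) * ((k+2*b+c).factorial : ℝ) /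
  ((2:ℝ)^(k+b) * (c.factorial : ℝ) * (b.factorial : ℝ) * ((k+2*b+2*c).factorial : ℝ)
    * ((k+b+c).factorial : ℝ))

lemma fact_ne (n : ℕ) : ((n.factorial : ℝ)) ≠ 0 := by
  exact_mod_cast n.factorial_pos.ne'

set_option maxHeartbeats 2000000 in
lemma besselG_key (k b c : ℕ) :
    besselG k (b+1) (c+1) - besselG k 0 (b+c+2) / besselG k 0 (b+c+1) * besselG k (b+1) c
      = besselG (k+1) b (c+1) := by
  have h1 : ((2*k+2*(b+1)+2*(c+1)).factorial : ℝ) = ((2*k+2*b+2*c+4:ℝ))*((2*k+2*b+2*c+3:ℝ))*((2*k+2*b+2*c+2).factorial : ℝ) := by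
    rw [show 2*k+2*(b+1)+2*(c+1) = 2*k+2*b+2*c+2+1+1 by ring]
    rw [Nat.factorial_succ, Nat.factorial_succ]
    push_cast; ring
  have h2 : (((b+1)+(c+1)).factorial : ℝ) = ((b+c+2:ℝ))*((b+c+1).factorial : ℝ) := by
    rw [show (b+1)+(c+1) = b+c+1+1 by ring]
    rw [Nat.factorial_succ]
    push_cast; ring
  have h3 : ((k+2*(b+1)+(c+1)).factorial : ℝ) = ((k+2*b+c+3:ℝ))*((k+2*b+c+2).factorial : ℝ) := by
    rw [show k+2*(b+1)+(c+1) = k+2*b+c+2+1 by ring]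
    rw [Nat.factorial_succ]
    push_cast; ring
  have h4 : ((c+1).factorial : ℝ) = ((c+1:ℝ))*((c).factorial : ℝ) := by
    rw [show c+1 = c+1 by ring]
    rw [Nat.factorial_succ]
    push_cast; ring
  have h5 : ((b+1).factorial : ℝ) = ((b+1:ℝ))*((b).factorial : ℝ) := by
    rw [show b+1 = b+1 by ring]
    rw [Nat.factorial_succ]
    push_cast; ring
  have h6 : ((k+2*(b+1)+2*(c+1)).factorial : ℝ) = ((k+2*b+2*c+4:ℝ))*((k+2*b+2*c+3:ℝ))*((k+2*b+2*c+2).factorial : ℝ) := by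
    rw [show k+2*(b+1)+2*(c+1) = k+2*b+2*c+2+1+1 by ring]
    rw [Nat.factorial_succ, Nat.factorial_succ]
    push_cast; ring
  have h7 : ((k+(b+1)+(c+1)).factorial : ℝ) = ((k+b+c+2:ℝ))*((k+b+c+1).factorial : ℝ) := by
    rw [show k+(b+1)+(c+1) = k+b+c+1+1 by ring]
    rw [Nat.factorial_succ]
    push_cast; ring
  have h8 : ((2*k+2*0+2*(b+c+2)).factorial : ℝ) = ((2*k+2*b+2*c+4:ℝ))*((2*k+2*b+2*c+3:ℝ))*((2*k+2*b+2*c+2).factorial : ℝ) := by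
    rw [show 2*k+2*0+2*(b+c+2) = 2*k+2*b+2*c+2+1+1 by ring]
    rw [Nat.factorial_succ, Nat.factorial_succ]
    push_cast; ring
  have h9 : ((0+(b+c+2)).factorial : ℝ) = ((b+c+2:ℝ))*((b+c+1).factorial : ℝ) := by
    rw [show 0+(b+c+2) = b+c+1+1 by ring]
    rw [Nat.factorial_succ]
    push_cast; ring
  have h10 : ((k+2*0+(b+c+2)).factorial : ℝ) = ((k+b+c+2:ℝ))*((k+b+c+1).factorial : ℝ) := by
    rw [show k+2*0+(b+c+2) = k+b+c+1+1 by ring]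
    rw [Nat.factorial_succ]
    push_cast; ring
  have h11 : ((k+2*0+2*(b+c+2)).factorial : ℝ) = ((k+2*b+2*c+4:ℝ))*((k+2*b+2*c+3:ℝ))*((k+2*b+2*c+2).factorial : ℝ) := by
    rw [show k+2*0+2*(b+c+2) = k+2*b+2*c+2+1+1 by ring]
    rw [Nat.factorial_succ, Nat.factorial_succ]
    push_cast; ring
  have h12 : ((k+0+(b+c+2)).factorial : ℝ) = ((k+b+c+2:ℝ))*((k+b+c+1).factorial : ℝ) := by
    rw [show k+0+(b+c+2) = k+b+c+1+1 by ring]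
    rw [Nat.factorial_succ]
    push_cast; ring
  have h13 : ((2*k+2*0+2*(b+c+1)).factorial : ℝ) = ((2*k+2*b+2*c+2).factorial : ℝ) := by
    rw [show 2*k+2*0+2*(b+c+1) = 2*k+2*b+2*c+2 by ring]
  have h14 : ((0+(b+c+1)).factorial : ℝ) = ((b+c+1).factorial : ℝ) := by
    rw [show 0+(b+c+1) = b+c+1 by ring]
  have h15 : ((k+2*0+(b+c+1)).factorial : ℝ) = ((k+b+c+1).factorial : ℝ) := by
    rw [show k+2*0+(b+c+1) = k+b+c+1 by ring]
  have h16 : ((k+2*0+2*(b+c+1)).factorial : ℝ) = ((k+2*b+2*c+2).factorial : ℝ) := by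
    rw [show k+2*0+2*(b+c+1) = k+2*b+2*c+2 by ring]
  have h17 : ((k+0+(b+c+1)).factorial : ℝ) = ((k+b+c+1).factorial : ℝ) := by
    rw [show k+0+(b+c+1) = k+b+c+1 by ring]
  have h18 : ((2*k+2*(b+1)+2*c).factorial : ℝ) = ((2*k+2*b+2*c+2).factorial : ℝ) := by
    rw [show 2*k+2*(b+1)+2*c = 2*k+2*b+2*c+2 by ring]
  have h19 : (((b+1)+c).factorial : ℝ) = ((b+c+1).factorial : ℝ) := by
    rw [show (b+1)+c = b+c+1 by ring]
  have h20 : ((k+2*(b+1)+c).factorial : ℝ) = ((k+2*b+c+2).factorial : ℝ) := by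
    rw [show k+2*(b+1)+c = k+2*b+c+2 by ring]
  have h21 : ((k+2*(b+1)+2*c).factorial : ℝ) = ((k+2*b+2*c+2).factorial : ℝ) := by
    rw [show k+2*(b+1)+2*c = k+2*b+2*c+2 by ring]
  have h22 : ((k+(b+1)+c).factorial : ℝ) = ((k+b+c+1).factorial : ℝ) := by
    rw [show k+(b+1)+c = k+b+c+1 by ring]
  have h23 : ((2*(k+1)+2*b+2*(c+1)).factorial : ℝ) = ((2*k+2*b+2*c+4:ℝ))*((2*k+2*b+2*c+3:ℝ))*((2*k+2*b+2*c+2).factorial : ℝ) := by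
    rw [show 2*(k+1)+2*b+2*(c+1) = 2*k+2*b+2*c+2+1+1 by ring]
    rw [Nat.factorial_succ, Nat.factorial_succ]
    push_cast; ring
  have h24 : ((b+(c+1)).factorial : ℝ) = ((b+c+1).factorial : ℝ) := by
    rw [show b+(c+1) = b+c+1 by ring]
  have h25 : (((k+1)+2*b+(c+1)).factorial : ℝ) = (((k+2*b+c+2)).factorial : ℝ) := by
    rw [show (k+1)+2*b+(c+1) = k+2*b+c+2 by ring]
  have h26 : (((k+1)+2*b+2*(c+1)).factorial : ℝ) = ((k+2*b+2*c+3:ℝ))*((k+2*b+2*c+2).factorial : ℝ) := by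
    rw [show (k+1)+2*b+2*(c+1) = k+2*b+2*c+2+1 by ring]
    rw [Nat.factorial_succ]
    push_cast; ring
  have h27 : (((k+1)+b+(c+1)).factorial : ℝ) = ((k+b+c+2:ℝ))*((k+b+c+1).factorial : ℝ) := by
    rw [show (k+1)+b+(c+1) = k+b+c+1+1 by ring]
    rw [Nat.factorial_succ]
    push_cast; ring
  have hp1 : (2:ℝ)^(k+(b+1)) = 2^(k+b)*2 := by rw [show k+(b+1) = (k+b)+1 by ring, pow_succ]
  have hp2 : (2:ℝ)^((k+1)+b) = 2^(k+b)*2 := by rw [show (k+1)+b = (k+b)+1 by ring, pow_succ]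
  have hp3 : (2:ℝ)^(k+0) = 2^(k+b) / 2^b := by
    rw [show k+0 = k by ring, eq_div_iff (by positivity), ← pow_add]
  have n1 : (2*(k:ℝ)+2*b+2*c+4) ≠ 0 := by positivity
  have n2 : (2*(k:ℝ)+2*b+2*c+3) ≠ 0 := by positivity
  have n3 : ((b:ℝ)+c+2) ≠ 0 := by positivity
  have n4 : ((k:ℝ)+2*b+c+3) ≠ 0 := by positivity
  have n5 : ((c:ℝ)+1) ≠ 0 := by positivity
  have n6 : ((b:ℝ)+1) ≠ 0 := by positivity
  have n7 : ((k:ℝ)+2*b+2*c+4) ≠ 0 := by positivity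
  have n8 : ((k:ℝ)+2*b+2*c+3) ≠ 0 := by positivity
  have n9 : ((k:ℝ)+b+c+2) ≠ 0 := by positivity
  have n10 : (2:ℝ)^(k+b) ≠ 0 := by positivity
  have n11 : (2:ℝ)^b ≠ 0 := by positivity
  have hq : ((b:ℝ)+c+2)*((k:ℝ)+2*b+c+3) / (((b:ℝ)+1)*((k:ℝ)+2*b+2*c+4))
      - ((c:ℝ)+1)*((k:ℝ)+b+c+2) / (((b:ℝ)+1)*((k:ℝ)+2*b+2*c+4)) = 1 := by
    rw [div_sub_div_same, div_eq_one_iff_eq (by positivity)]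
    ring
  have E1 : besselG k (b+1) (c+1)
      = ((b:ℝ)+c+2)*((k:ℝ)+2*b+c+3) / (((b:ℝ)+1)*((k:ℝ)+2*b+2*c+4)) * besselG (k+1) b (c+1) := by
    simp only [besselG, h1,h2,h3,h4,h5,h6,h7,h23,h24,h25,h26,h27,hp1,hp2]
    field_simp [fact_ne]
  have h28 : ((b+c+2).factorial : ℝ) = ((b+c+2:ℝ))*((b+c+1).factorial : ℝ) := by
    rw [show b+c+2 = b+c+1+1 by ring, Nat.factorial_succ]
    push_cast; ring
  have E2 : besselG k 0 (b+c+2) / besselG k 0 (b+c+1) * besselG k (b+1) c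
      = ((c:ℝ)+1)*((k:ℝ)+b+c+2) / (((b:ℝ)+1)*((k:ℝ)+2*b+2*c+4)) * besselG (k+1) b (c+1) := by
    simp only [besselG, Nat.factorial_zero, h28, h4,h5,h8,h9,h10,h11,h12,h13,h14,h15,h16,h17,h18,h19,h20,h21,h22,h23,h24,h25,h26,h27,hp1,hp2,hp3]
    field_simp [fact_ne]
  rw [E1, E2, ← sub_mul, hq, one_mul]

lemma besselG_diag (k b : ℕ) : besselG k (b+1) 0 = besselG (k+1) b 0 := by
  simp only [besselG]
  have h1 : ((2*k+2*(b+1)+2*0).factorial : ℝ) = ((2*k+2*b+2).factorial : ℝ) := by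
    rw [show 2*k+2*(b+1)+2*0 = 2*k+2*b+2 by ring]
  have h2 : ((2*(k+1)+2*b+2*0).factorial : ℝ) = ((2*k+2*b+2).factorial : ℝ) := by
    rw [show 2*(k+1)+2*b+2*0 = 2*k+2*b+2 by ring]
  have h3 : (((b+1)+0).factorial : ℝ) = ((b+1:ℝ))*((b).factorial : ℝ) := by
    rw [show (b+1)+0 = b+1 by ring]
    rw [Nat.factorial_succ]
    push_cast; ring
  have h4 : ((b+0).factorial : ℝ) = ((b).factorial : ℝ) := by
    rw [show b+0 = b by ring]
  have h5 : ((k+2*(b+1)+0).factorial : ℝ) = ((k+2*b+2:ℝ))*((k+2*b+1).factorial : ℝ) := by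
    rw [show k+2*(b+1)+0 = k+2*b+1+1 by ring]
    rw [Nat.factorial_succ]
    push_cast; ring
  have h6 : (((k+1)+2*b+0).factorial : ℝ) = ((k+2*b+1).factorial : ℝ) := by
    rw [show (k+1)+2*b+0 = k+2*b+1 by ring]
  have h7 : (((b+1)).factorial : ℝ) = ((b+1:ℝ))*((b).factorial : ℝ) := by
    rw [show (b+1) = b+1 by ring]
    rw [Nat.factorial_succ]
    push_cast; ring
  have h8 : ((k+2*(b+1)+2*0).factorial : ℝ) = ((k+2*b+2:ℝ))*((k+2*b+1).factorial : ℝ) := by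
    rw [show k+2*(b+1)+2*0 = k+2*b+1+1 by ring]
    rw [Nat.factorial_succ]
    push_cast; ring
  have h9 : (((k+1)+2*b+2*0).factorial : ℝ) = ((k+2*b+1).factorial : ℝ) := by
    rw [show (k+1)+2*b+2*0 = k+2*b+1 by ring]
  have h10 : ((k+(b+1)+0).factorial : ℝ) = ((k+b+1:ℝ))*((k+b).factorial : ℝ) := by
    rw [show k+(b+1)+0 = k+b+1 by ring]
    rw [Nat.factorial_succ]
    push_cast; ring
  have h11 : (((k+1)+b+0).factorial : ℝ) = ((k+b+1:ℝ))*((k+b).factorial : ℝ) := by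
    rw [show (k+1)+b+0 = k+b+1 by ring]
    rw [Nat.factorial_succ]
    push_cast; ring
  have hp1 : (2:ℝ)^(k+(b+1)) = 2^(k+b)*2 := by rw [show k+(b+1) = (k+b)+1 by ring, pow_succ]
  have hp2 : (2:ℝ)^((k+1)+b) = 2^(k+b)*2 := by rw [show (k+1)+b = (k+b)+1 by ring, pow_succ]
  simp only [h1,h2,h3,h4,h5,h6,h7,h8,h9,h10,h11,hp1,hp2]
  have n6 : ((b:ℝ)+1) ≠ 0 := by positivity
  have n7 : ((k:ℝ)+2*b+2) ≠ 0 := by positivity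
  have n9 : ((k:ℝ)+b+1) ≠ 0 := by positivity
  have n10 : (2:ℝ)^(k+b) ≠ 0 := by positivity
  field_simp [fact_ne]

lemma besselG_closed : ∀ k b c : ℕ, besselNE k (k+1+b+c) (k+1+b) = besselG k b c := by
  intro k
  induction k with
  | zero =>
    intro b c
    show besselA (0+1+b+c) (0+1+b) = besselG 0 b c
    rw [besselA, if_pos (by omega)]
    have e1 : (0+1+b+c) + (0+1+b) - 2 = 2*b+c := by omega
    have e2 : (0+1+b+c) - (0+1+b) = c := by omega
    have e3 : (0+1+b) - 1 = b := by omega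
    rw [e1, e2, e3, besselG]
    norm_num
    rw [div_eq_div_iff (by positivity) (by positivity)]
    ring
  | succ k ih =>
    intro b c
    rw [besselNE]
    rcases Nat.eq_zero_or_pos c with hc | hc
    · subst hc
      rw [if_neg (by omega)]
      rw [show k+1+1+b+0 = k+1+(b+1)+0 by omega]
      rw [show k+1+1+b = k+1+(b+1) by omega]
      rw [ih (b+1) 0]
      exact besselG_diag k b
    · obtain ⟨c, rfl⟩ : ∃ c', c = c' + 1 := ⟨c - 1, by omega⟩
      rw [if_pos (by omega)]
      have t1 := ih (b+1) (c+1)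
      rw [show k+1+(b+1)+(c+1) = k+1+1+b+(c+1) by omega,
          show k+1+(b+1) = k+1+1+b by omega] at t1
      have t2 := ih 0 (b+c+2)
      rw [show k+1+0+(b+c+2) = k+1+1+b+(c+1) by omega,
          show k+1+0 = k+1 by omega] at t2
      have t3 := ih 0 (b+c+1)
      rw [show k+1+0+(b+c+1) = k+1+1+b+(c+1) - 1 by omega,
          show k+1+0 = k+1 by omega] at t3
      have t4 := ih (b+1) c
      rw [show k+1+(b+1)+c = k+1+1+b+(c+1) - 1 by omega,
          show k+1+(b+1) = k+1+1+b by omega] at t4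
      rw [t1, t2, t3, t4]
      exact besselG_key k b c

lemma besselG_ratio (K M : ℕ) :
    besselG K 0 (M+1) / besselG K 0 M
      = ((2*(K:ℝ)+2*M+2) * (2*(K:ℝ)+2*M+1)) / (((K:ℝ)+2*M+2) * ((K:ℝ)+2*M+1)) := by
  simp only [besselG]
  have h1 : ((2*K+2*0+2*(M+1)).factorial : ℝ)
      = ((2*K+2*M+2:ℝ)) * ((2*K+2*M+1:ℝ)) * ((2*K+2*M).factorial : ℝ) := by
    rw [show 2*K+2*0+2*(M+1) = 2*K+2*M+1+1 by ring, Nat.factorial_succ,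
        show 2*K+2*M+1 = 2*K+2*M+1 by ring, Nat.factorial_succ]
    push_cast; ring
  have h2 : ((0+(M+1)).factorial : ℝ) = ((M+1:ℝ)) * (M.factorial : ℝ) := by
    rw [show 0+(M+1) = M+1 by ring, Nat.factorial_succ]; push_cast; ring
  have h3 : ((K+2*0+(M+1)).factorial : ℝ) = ((K+M+1:ℝ)) * ((K+0+M).factorial : ℝ) := by
    rw [show K+2*0+(M+1) = (K+0+M)+1 by ring, Nat.factorial_succ]; push_cast; ring
  have h4 : ((K+2*0+2*(M+1)).factorial : ℝ)
      = ((K+2*M+2:ℝ)) * ((K+2*M+1:ℝ)) * ((K+2*0+2*M).factorial : ℝ) := by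
    rw [show K+2*0+2*(M+1) = (K+2*0+2*M)+1+1 by ring, Nat.factorial_succ, Nat.factorial_succ]
    push_cast; ring
  have h5 : ((K+0+(M+1)).factorial : ℝ) = ((K+M+1:ℝ)) * ((K+0+M).factorial : ℝ) := by
    rw [show K+0+(M+1) = (K+0+M)+1 by ring, Nat.factorial_succ]; push_cast; ring
  have h6 : ((2*K+2*0+2*M).factorial : ℝ) = ((2*K+2*M).factorial : ℝ) := by norm_num
  have h7 : ((0+M).factorial : ℝ) = (M.factorial : ℝ) := by norm_num
  have h8 : (((M:ℕ)+1).factorial : ℝ) = ((M+1:ℝ)) * (M.factorial : ℝ) := by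
    rw [Nat.factorial_succ]; push_cast; ring
  simp only [h1, h2, h3, h4, h5, h6, h7, h8]
  have n1 : (2*(K:ℝ)+2*M+2) ≠ 0 := by positivity
  have n2 : (2*(K:ℝ)+2*M+1) ≠ 0 := by positivity
  have n3 : ((M:ℝ)+1) ≠ 0 := by positivity
  have n4 : ((K:ℝ)+M+1) ≠ 0 := by positivity
  have n5 : ((K:ℝ)+2*M+2) ≠ 0 := by positivity
  have n6 : ((K:ℝ)+2*M+1) ≠ 0 := by positivity
  have n10 : (2:ℝ)^(K+0) ≠ 0 := by positivity
  field_simp [fact_ne]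

theorem bessel_NE_multipliers (n i j : ℕ) (hj : 1 ≤ j) (hji : j < i) (hin : i ≤ n) :
    besselNE (j - 1) i j / besselNE (j - 1) (i - 1) j
      = ((2 * i - 2 : ℕ) : ℝ) * ((2 * i - 3 : ℕ) : ℝ)
        / (((2 * i - j - 1 : ℕ) : ℝ) * ((2 * i - j - 2 : ℕ) : ℝ)) := by
  obtain ⟨K, rfl⟩ : ∃ K, j = K + 1 := ⟨j - 1, by omega⟩
  obtain ⟨M, rfl⟩ : ∃ M, i = K + M + 2 := ⟨i - K - 2, by omega⟩
  rw [show K+1-1 = K by omega, show K+M+2-1 = K+M+1 by omega]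
  have t1 := besselG_closed K 0 (M+1)
  rw [show K+1+0+(M+1) = K+M+2 by omega, show K+1+0 = K+1 by omega] at t1
  have t2 := besselG_closed K 0 M
  rw [show K+1+0+M = K+M+1 by omega, show K+1+0 = K+1 by omega] at t2
  rw [t1, t2, besselG_ratio]
  rw [show 2*(K+M+2)-2 = 2*K+2*M+2 by omega, show 2*(K+M+2)-3 = 2*K+2*M+1 by omega,
      show 2*(K+M+2)-(K+1)-1 = K+2*M+2 by omega, show 2*(K+M+2)-(K+1)-2 = K+2*M+1 by omega]
  push_cast
  ring
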